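/- For every b with 0 < b < 2/π and every nonnegative integer n, the equation ω = b·tan(ωπ/2) has exactly one solution ω in the open interval (2n, 2n+1). -/

import Mathlib

open Real

private lemma sin_ne_aux (n : ℕ) {x : ℝ} (hx : x ∈ Set.Ioo (2 * n : ℝ) (2 * n + 1)) :
    Real.sin (x * π / 2) ≠ 0 := by
  intro h
  rw [Real.sin_eq_zero_iff] at h
  obtain ⟨k, hk⟩ := h
  have hπ := Real.pi_pos
  have hxk : x = 2 * k := by
    have h2 : (k : ℝ) * π * 2 = x * π := by linarith [hk]
    have := mul_right_cancel₀ (ne_of_gt hπ) (by linarith : (2 * k : ℝ) * π = x * π)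
    linarith
  rw [hxk] at hx
  have h1 : (2 * n : ℤ) < 2 * k := by exact_mod_cast hx.1
  have h2 : (2 * k : ℤ) < 2 * n + 1 := by exact_mod_cast hx.2
  omega

private lemma cos_ne_aux (n : ℕ) {x : ℝ} (hx : x ∈ Set.Ioo (2 * n : ℝ) (2 * n + 1)) :
    Real.cos (x * π / 2) ≠ 0 := by
  intro h
  rw [Real.cos_eq_zero_iff] at h
  obtain ⟨k, hk⟩ := h
  have hπ := Real.pi_pos
  have hxk : x = 2 * k + 1 := by
    have h2 : x * (π / 2) = (2 * (k:ℝ) + 1) * (π / 2) := by linarith [hk]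
    have := mul_right_cancel₀ (by positivity : (π / 2 : ℝ) ≠ 0) h2
    linarith
  rw [hxk] at hx
  have h1 : (2 * n : ℤ) < 2 * k + 1 := by exact_mod_cast hx.1
  have h2 : (2 * k + 1 : ℤ) < 2 * n + 1 := by exact_mod_cast hx.2
  omega

private lemma aux_anti (n : ℕ) :
    StrictAntiOn (fun ω : ℝ => ω * Real.cos (ω * π / 2) / Real.sin (ω * π / 2))
      (Set.Ioo (2 * n : ℝ) (2 * n + 1)) := by
  have hπ := Real.pi_pos
  apply strictAntiOn_of_deriv_neg (convex_Ioo _ _)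
  · apply ContinuousOn.div
    · fun_prop
    · fun_prop
    · exact fun x hx => sin_ne_aux n hx
  · intro x hx
    rw [interior_Ioo] at hx
    have hs := sin_ne_aux n hx
    have hx0 : 0 < x := lt_of_le_of_lt (by positivity) hx.1
    have hθ0 : 0 < x * π / 2 := by positivity
    have h1 : HasDerivAt (fun ω : ℝ => ω * π / 2) (π / 2) x := by
      simpa using ((hasDerivAt_id x).mul_const π).div_const 2
    have hcos : HasDerivAt (fun ω : ℝ => Real.cos (ω * π / 2))
        (-Real.sin (x * π / 2) * (π / 2)) x :=
      by have := (Real.hasDerivAt_cos (x * π / 2)).comp x h1; exact this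
    have hsin : HasDerivAt (fun ω : ℝ => Real.sin (ω * π / 2))
        (Real.cos (x * π / 2) * (π / 2)) x :=
      by have := (Real.hasDerivAt_sin (x * π / 2)).comp x h1; exact this
    have hu : HasDerivAt (fun ω : ℝ => ω * Real.cos (ω * π / 2))
        (1 * Real.cos (x * π / 2) + x * (-Real.sin (x * π / 2) * (π / 2))) x :=
      (hasDerivAt_id x).mul hcos
    have hH := hu.div hsin hs
    rw [show (fun ω : ℝ => ω * Real.cos (ω * π / 2) / Real.sin (ω * π / 2)) =
      ((fun ω : ℝ => ω * Real.cos (ω * π / 2)) / fun ω => Real.sin (ω * π / 2)) from rfl,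
      hH.deriv]
    apply div_neg_of_neg_of_pos
    · have hlt : Real.sin (x * π / 2) * Real.cos (x * π / 2) < x * π / 2 := by
        have h2 := Real.sin_lt (by linarith : (0:ℝ) < 2 * (x * π / 2))
        rw [Real.sin_two_mul] at h2
        linarith
      have key : (1 * Real.cos (x * π / 2) + x * (-Real.sin (x * π / 2) * (π / 2))) *
            Real.sin (x * π / 2) - x * Real.cos (x * π / 2) * (Real.cos (x * π / 2) * (π / 2)) =
          Real.sin (x * π / 2) * Real.cos (x * π / 2) -
            (x * π / 2) * (Real.sin (x * π / 2) ^ 2 + Real.cos (x * π / 2) ^ 2) := by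
        ring
      rw [key, Real.sin_sq_add_cos_sq]
      linarith
    · exact pow_two_pos_of_ne_zero hs

/-- For 0 < b < 2/π and each n ∈ ℕ, the equation ω = b tan(ωπ/2) has exactly one
solution in (2n, 2n+1). -/
theorem stmt_4 (b : ℝ) (hb0 : 0 < b) (hb : b < 2 / π) (n : ℕ) :
    ∃! ω : ℝ, ω ∈ Set.Ioo (2 * n : ℝ) (2 * n + 1) ∧ ω = b * Real.tan (ω * π / 2) := by
  have hπ := Real.pi_pos
  have hiff : ∀ ω ∈ Set.Ioo (2 * n : ℝ) (2 * n + 1),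
      (ω = b * Real.tan (ω * π / 2)) ↔
        ω * Real.cos (ω * π / 2) = b * Real.sin (ω * π / 2) := by
    intro ω hω
    have hc := cos_ne_aux n hω
    rw [Real.tan_eq_sin_div_cos, ← mul_div_assoc, eq_div_iff hc]
  have hfc : Continuous fun ω : ℝ =>
      ω * Real.cos (ω * π / 2) - b * Real.sin (ω * π / 2) := by fun_prop
  have hex : ∃ ω ∈ Set.Ioo (2 * n : ℝ) (2 * n + 1),
      ω * Real.cos (ω * π / 2) = b * Real.sin (ω * π / 2) := by
    rcases Nat.eq_zero_or_pos n with hn | hn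
    · subst hn
      have hbπ : b * π < 2 := (lt_div_iff₀ hπ).mp hb
      obtain ⟨ε, hε_def⟩ : ∃ ε : ℝ, ε = 1 - b * π / 2 := ⟨_, rfl⟩
      have hε : 0 < ε := by rw [hε_def]; linarith
      have hε1 : ε < 1 := by rw [hε_def]; nlinarith
      obtain ⟨ω₀, hω₀_def⟩ : ∃ w : ℝ, w = min (1/2 : ℝ) (ε / π) := ⟨_, rfl⟩
      have hω₀pos : 0 < ω₀ := hω₀_def ▸ lt_min (by norm_num) (by positivity)
      have hω₀le : ω₀ ≤ 1/2 := hω₀_def ▸ min_le_left _ _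
      have hω₀ε : ω₀ ≤ ε / π := hω₀_def ▸ min_le_right _ _
      have hθ₀le : ω₀ * π / 2 ≤ ε / 2 := by
        have h1 : ω₀ * π ≤ (ε / π) * π := mul_le_mul_of_nonneg_right hω₀ε hπ.le
        have h2 : (ε / π) * π = ε := by field_simp
        linarith
      have hθ₀pos : 0 < ω₀ * π / 2 := by positivity
      have hcos := Real.one_sub_sq_div_two_le_cos (x := ω₀ * π / 2)
      have hsin := Real.sin_le hθ₀pos.le
      have hfω₀ : 0 < ω₀ * Real.cos (ω₀ * π / 2) - b * Real.sin (ω₀ * π / 2) := by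
        have h3 : b * Real.sin (ω₀ * π / 2) ≤ b * (ω₀ * π / 2) :=
          mul_le_mul_of_nonneg_left hsin hb0.le
        have h4 : ω₀ * (1 - (ω₀ * π / 2) ^ 2 / 2) ≤ ω₀ * Real.cos (ω₀ * π / 2) :=
          mul_le_mul_of_nonneg_left hcos hω₀pos.le
        have h5 : (ω₀ * π / 2) ^ 2 ≤ (ε / 2) ^ 2 := by nlinarith
        have h6 : b * (ω₀ * π / 2) = ω₀ * (1 - ε) := by rw [hε_def]; ring
        have h7 : 0 < ε - (ε / 2) ^ 2 / 2 := by nlinarith [mul_pos hε (sub_pos.mpr hε1)]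
        nlinarith [mul_pos hω₀pos h7, mul_le_mul_of_nonneg_left h5 hω₀pos.le]
      have hf1 : (1 : ℝ) * Real.cos (1 * π / 2) - b * Real.sin (1 * π / 2) = -b := by
        norm_num [Real.cos_pi_div_two, Real.sin_pi_div_two]
      have hsub := intermediate_value_Ioo' (by linarith : ω₀ ≤ (1:ℝ)) hfc.continuousOn
      have hmem : (0:ℝ) ∈ Set.Ioo
          ((1:ℝ) * Real.cos (1 * π / 2) - b * Real.sin (1 * π / 2))
          (ω₀ * Real.cos (ω₀ * π / 2) - b * Real.sin (ω₀ * π / 2)) := by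
        rw [hf1]; exact ⟨by linarith, hfω₀⟩
      obtain ⟨ω, hωm, hωf⟩ := hsub hmem
      refine ⟨ω, ?_, sub_eq_zero.mp hωf⟩
      constructor
      · push_cast; linarith [hωm.1, hω₀pos]
      · push_cast; linarith [hωm.2]
    · set F : ℝ → ℝ := fun ω =>
        (-1 : ℝ)^n * (ω * Real.cos (ω * π / 2) - b * Real.sin (ω * π / 2)) with hF_def
      have hFc : Continuous F := continuous_const.mul hfc
      have hsq : (-1 : ℝ)^n * (-1 : ℝ)^n = 1 := by
        rw [← mul_pow]; norm_num
      have e1 : (2 * (n:ℝ)) * π / 2 = n * π := by ring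
      have e2 : (2 * (n:ℝ) + 1) * π / 2 = n * π + π / 2 := by ring
      have hcosn : Real.cos ((n:ℝ) * π) = (-1)^n := by
        simpa using Real.cos_nat_mul_pi_sub 0 n
      have hsinn : Real.sin ((n:ℝ) * π) = 0 := Real.sin_nat_mul_pi n
      have hF1 : F (2 * n) = 2 * n := by
        simp only [hF_def, e1, hcosn, hsinn]
        linear_combination (2 * (n:ℝ)) * hsq
      have hF2 : F (2 * n + 1) = -b := by
        simp only [hF_def, e2, Real.cos_add_pi_div_two, Real.sin_add_pi_div_two,
          hcosn, hsinn]
        linear_combination (-b) * hsq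
      have hnR : (0:ℝ) < n := by exact_mod_cast hn
      have hsub := intermediate_value_Ioo' (by linarith : (2*(n:ℝ)) ≤ 2*n+1)
        hFc.continuousOn
      have hmem : (0:ℝ) ∈ Set.Ioo (F (2*n+1)) (F (2*n)) := by
        rw [hF1, hF2]; exact ⟨by linarith, by linarith⟩
      obtain ⟨ω, hωm, hωF⟩ := hsub hmem
      refine ⟨ω, hωm, ?_⟩
      have hne : (-1 : ℝ)^n ≠ 0 := by
        intro h; rw [h] at hsq; simp at hsq
      have h0 : (-1 : ℝ)^n * (ω * Real.cos (ω * π / 2) - b * Real.sin (ω * π / 2)) = 0 := hωF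
      have := (mul_eq_zero.mp h0).resolve_left hne
      linarith [this]
  obtain ⟨ω, hω, hωeq⟩ := hex
  have hval : ∀ y ∈ Set.Ioo (2 * n : ℝ) (2 * n + 1),
      y * Real.cos (y * π / 2) = b * Real.sin (y * π / 2) →
      y * Real.cos (y * π / 2) / Real.sin (y * π / 2) = b := by
    intro y hy hyeq
    rw [hyeq, mul_div_assoc, div_self (sin_ne_aux n hy), mul_one]
  refine ⟨ω, ⟨hω, (hiff ω hω).2 hωeq⟩, ?_⟩
  rintro y ⟨hy, hyeq⟩
  exact (aux_anti n).injOn hy hω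
    ((hval y hy ((hiff y hy).1 hyeq)).trans (hval ω hω hωeq).symm)
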